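/- Expectation bound from Jordan form: let R₂, R₃ be reflections on H with R₃ = V†(Z ⊗ I)V and R₂ = V† (Σ_l [[C_l, S_l],[S_l, −C_l]] ⊗ |l⟩⟨l|) V for an isometry V: H → ℂ² ⊗ Ĥ, with C_l = cos θ_l, S_l = sin θ_l, θ_l ∈ [0,π]. Then for any reflection R on another system A and density operator ρ on A ⊗ H, 2 + (1/2)tr((R₂R₃+R₃R₂)ρ) − √2·tr(|R₂+R₃| ρ) = E_l[(sqrt(1+C_l) − 1)²], where E_l is expectation over Pr(l) = tr((I ⊗ |l⟩⟨l|) VρV†) and |·| denotes the operator absolute value. -/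

import Mathlib

open Matrix
open scoped ComplexOrder Kronecker

noncomputable def PZ : Matrix (Fin 2) (Fin 2) ℂ := !![1, 0; 0, -1]

private lemma kronCT {p q r s : Type*} [Fintype p] [Fintype q] (A : Matrix p q ℂ)
    (B : Matrix r s ℂ) : (A ⊗ₖ B)ᴴ = Aᴴ ⊗ₖ Bᴴ := by
  ext ⟨i,j⟩ ⟨a,b⟩
  simp [conjTranspose_apply, kroneckerMap_apply, star_mul', mul_comm]

private lemma sum_std_one {m : ℕ} : ∑ l : Fin m, Matrix.single l l (1:ℂ) = 1 := by
  ext i j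
  rw [Matrix.sum_apply]
  simp only [Matrix.single, of_apply, one_apply]
  rw [Finset.sum_eq_single i] <;> aesop

private lemma K_mul {m : ℕ} (F G : Fin m → Matrix (Fin 2) (Fin 2) ℂ) :
    (∑ l, F l ⊗ₖ Matrix.single l l (1:ℂ)) * (∑ l, G l ⊗ₖ Matrix.single l l (1:ℂ)) =
    ∑ l, (F l * G l) ⊗ₖ Matrix.single l l (1:ℂ) := by
  rw [Finset.sum_mul_sum]
  refine Finset.sum_congr rfl fun l _ => ?_
  rw [Finset.sum_eq_single l]
  · rw [← mul_kronecker_mul, single_mul_single_same, mul_one]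
  · intro b _ hb
    rw [← mul_kronecker_mul, single_mul_single_of_ne (h := Ne.symm hb), kronecker_zero]
  · simp

private lemma K_diag {m : ℕ} (f : Fin m → ℂ) :
    ∑ l : Fin m, (f l • (1 : Matrix (Fin 2) (Fin 2) ℂ)) ⊗ₖ Matrix.single l l (1:ℂ) =
    diagonal (fun x : Fin 2 × Fin m => f x.2) := by
  ext ⟨i,l⟩ ⟨j,l'⟩
  rw [Matrix.sum_apply]
  simp only [kroneckerMap_apply, Matrix.smul_apply, one_apply, Matrix.single, of_apply, smul_eq_mul,
    diagonal_apply, Prod.mk.injEq]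
  rw [Finset.sum_eq_single l']
  · by_cases h : l = l' <;> by_cases h2 : i = j <;> aesop
  · intro b _ hb; aesop
  · simp

private lemma kron_sum_right {n p q : ℕ} (A : Matrix (Fin n) (Fin n) ℂ)
    (X : Fin q → Matrix (Fin p) (Fin p) ℂ) :
    A ⊗ₖ (∑ l, X l) = ∑ l, A ⊗ₖ X l := by
  ext ⟨i,a⟩ ⟨j,b⟩
  simp [kroneckerMap_apply, Matrix.sum_apply, Finset.mul_sum]

private lemma sq22 (c s : ℂ) (h : c*c + s*s = 1) :
    !![c,s;s,-c] * !![c,s;s,-c] = 1 := by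
  ext i j
  fin_cases i <;> fin_cases j <;>
    simp [Matrix.mul_apply, Fin.sum_univ_two, one_apply] <;> ring_nf <;>
      first | linear_combination h | linear_combination -h

private lemma sqT22 (c s : ℂ) (h : c*c + s*s = 1) :
    (!![c,s;s,-c] + PZ) * (!![c,s;s,-c] + PZ) = ((2:ℂ) + 2*c) • 1 := by
  ext i j
  fin_cases i <;> fin_cases j <;>
    simp [PZ, Matrix.mul_apply, Fin.sum_univ_two, one_apply] <;> ring_nf <;>
      linear_combination h

private lemma cross22 (c s : ℂ) :
    !![c,s;s,-c] * PZ + PZ * !![c,s;s,-c] = ((2:ℂ)*c) • 1 := by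
  ext i j
  fin_cases i <;> fin_cases j <;>
    simp [PZ, Matrix.mul_apply, Fin.sum_univ_two, one_apply] <;> ring

private lemma range_inv {n k : Type*} [Fintype n] [Fintype k] [DecidableEq k] [DecidableEq n]
    (V : Matrix n k ℂ) (hV : Vᴴ * V = 1)
    (W : Matrix n n ℂ) (hWH : Wᴴ = W) (hWW : W * W = 1)
    (hU : (Vᴴ * W * V) * (Vᴴ * W * V) = 1) : W * V = V * (Vᴴ * W * V) := by
  rw [← sub_eq_zero, ← conjTranspose_mul_self_eq_zero (A := W * V - V * (Vᴴ * W * V))]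
  have e0 : (W * V - V * (Vᴴ * W * V))ᴴ * (W * V - V * (Vᴴ * W * V)) =
      (W*V)ᴴ*(W*V) - (W*V)ᴴ*(V*(Vᴴ*W*V)) - (V*(Vᴴ*W*V))ᴴ*(W*V)
        + (V*(Vᴴ*W*V))ᴴ*(V*(Vᴴ*W*V)) := by
    rw [conjTranspose_sub, Matrix.sub_mul, Matrix.mul_sub, Matrix.mul_sub]; abel
  have hXH : (Vᴴ * W * V)ᴴ = Vᴴ * W * V := by
    rw [conjTranspose_mul, conjTranspose_mul, conjTranspose_conjTranspose, hWH,
      Matrix.mul_assoc]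
  have e1 : (W*V)ᴴ*(W*V) = 1 := by
    rw [conjTranspose_mul, hWH, Matrix.mul_assoc, ← Matrix.mul_assoc W, hWW, Matrix.one_mul, hV]
  have e2 : (W*V)ᴴ*(V*(Vᴴ*W*V)) = 1 := by
    rw [conjTranspose_mul, hWH, show Vᴴ * W * (V * (Vᴴ * W * V)) =
      (Vᴴ * W * V) * (Vᴴ * W * V) by simp only [Matrix.mul_assoc], hU]
  have e3 : (V*(Vᴴ*W*V))ᴴ*(W*V) = 1 := by
    rw [conjTranspose_mul, hXH, show Vᴴ * W * V * Vᴴ * (W * V) =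
      (Vᴴ * W * V) * (Vᴴ * W * V) by simp only [Matrix.mul_assoc], hU]
  have e4 : (V*(Vᴴ*W*V))ᴴ*(V*(Vᴴ*W*V)) = 1 := by
    rw [conjTranspose_mul, hXH, show Vᴴ * W * V * Vᴴ * (V * (Vᴴ * W * V)) =
      (Vᴴ * W * V) * (Vᴴ * V) * (Vᴴ * W * V) by simp only [Matrix.mul_assoc], hV, Matrix.mul_one, hU]
  rw [e0, e1, e2, e3, e4]
  simp
noncomputable def Bb (x : ℝ) : Matrix (Fin 2) (Fin 2) ℂ :=
  !![(Real.cos x : ℂ), (Real.sin x : ℂ); (Real.sin x : ℂ), -(Real.cos x : ℂ)]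

private lemma Bb_cs (x : ℝ) : (Real.cos x : ℂ) * (Real.cos x : ℂ)
    + (Real.sin x : ℂ) * (Real.sin x : ℂ) = 1 := by
  norm_cast
  linear_combination Real.sin_sq_add_cos_sq x

private lemma Bb_sq (x : ℝ) : Bb x * Bb x = 1 := sq22 _ _ (Bb_cs x)

private lemma Bb_H (x : ℝ) : (Bb x)ᴴ = Bb x := by
  ext i j
  fin_cases i <;> fin_cases j <;>
    simp [Bb, conjTranspose_apply, ← Complex.ofReal_cos, ← Complex.ofReal_sin, Complex.conj_ofReal]

private lemma PZ_H : PZᴴ = PZ := by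
  ext i j
  fin_cases i <;> fin_cases j <;> simp [PZ, conjTranspose_apply]

private lemma PZ_sq : PZ * PZ = 1 := by
  ext i j
  fin_cases i <;> fin_cases j <;> simp [PZ, Matrix.mul_apply, Fin.sum_univ_two, one_apply]

private lemma BbPZ_sq (x : ℝ) : (Bb x + PZ) * (Bb x + PZ)
    = ((2 + 2*Real.cos x : ℝ) : ℂ) • 1 := by
  have := sqT22 _ _ (Bb_cs x)
  rw [show ((2 + 2*Real.cos x : ℝ) : ℂ) = (2:ℂ) + 2*(Real.cos x : ℂ) by push_cast; ring]
  exact this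

private lemma Bb_cross (x : ℝ) : Bb x * PZ + PZ * Bb x
    = ((2*Real.cos x : ℝ) : ℂ) • 1 := by
  have := cross22 (Real.cos x : ℂ) (Real.sin x : ℂ)
  rw [show ((2*Real.cos x : ℝ) : ℂ) = (2:ℂ)*(Real.cos x : ℂ) by push_cast; ring]
  exact this

private lemma stdH {m : ℕ} (l : Fin m) :
    (Matrix.single l l (1:ℂ))ᴴ = Matrix.single l l (1:ℂ) := by
  ext i j
  simp [conjTranspose_apply, Matrix.single]
  aesop

/-- expectation bound from Jordan form: with
`R₃ = Vᴴ(Z ⊗ I)V` and `R₂ = Vᴴ(Σ_l [[C_l,S_l],[S_l,−C_l]] ⊗ |l⟩⟨l|)V` for an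
isometry `V : H → ℂ² ⊗ Ĥ`, any reflection `R` on `A`, and any density operator
`ρ` on `A ⊗ H`,
`2 + (1/2) tr((R₂R₃+R₃R₂)ρ) − √2 tr(|R₂+R₃| ρ) = E_l[(√(1+C_l) − 1)²]`,
where `Pr(l) = tr((I ⊗ |l⟩⟨l|) V ρ V†)`. -/
theorem stmt_18 {nA k m : ℕ}
    (ρ : Matrix (Fin nA × Fin k) (Fin nA × Fin k) ℂ)
    (hρ : ρ.PosSemidef) (hρtr : ρ.trace = 1)
    (R : Matrix (Fin nA) (Fin nA) ℂ) (hR : Rᴴ = R) (hR2 : R * R = 1)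
    (V : Matrix (Fin 2 × Fin m) (Fin k) ℂ) (hV : Vᴴ * V = 1)
    (θ : Fin m → ℝ) (hθ : ∀ l, θ l ∈ Set.Icc 0 Real.pi)
    (R₂ R₃ : Matrix (Fin k) (Fin k) ℂ)
    (hR₃ : R₃ = Vᴴ * (PZ ⊗ₖ (1 : Matrix (Fin m) (Fin m) ℂ)) * V)
    (hR₂ : R₂ = Vᴴ * (∑ l : Fin m,
        (!![(Real.cos (θ l) : ℂ), (Real.sin (θ l) : ℂ);
            (Real.sin (θ l) : ℂ), -(Real.cos (θ l) : ℂ)]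
          ⊗ₖ Matrix.single l l (1 : ℂ))) * V)
    (hR₂refl : R₂ᴴ = R₂ ∧ R₂ * R₂ = 1) (hR₃refl : R₃ᴴ = R₃ ∧ R₃ * R₃ = 1)
    -- `Ab` is the operator absolute value `|R₂ + R₃|`
    (Ab : Matrix (Fin k) (Fin k) ℂ)
    (hAb : Ab.PosSemidef) (hAb2 : Ab * Ab = (R₂ + R₃) * (R₂ + R₃)) :
    2 + (1 / 2 : ℝ) * (((1 : Matrix (Fin nA) (Fin nA) ℂ) ⊗ₖ (R₂ * R₃ + R₃ * R₂)) * ρ).trace.re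
      - Real.sqrt 2 * (((1 : Matrix (Fin nA) (Fin nA) ℂ) ⊗ₖ Ab) * ρ).trace.re =
    ∑ l : Fin m,
      ((((1 : Matrix (Fin nA) (Fin nA) ℂ) ⊗ₖ
          ((1 : Matrix (Fin 2) (Fin 2) ℂ) ⊗ₖ Matrix.single l l (1 : ℂ)))
        * (((1 : Matrix (Fin nA) (Fin nA) ℂ) ⊗ₖ V) * ρ
            * ((1 : Matrix (Fin nA) (Fin nA) ℂ) ⊗ₖ V)ᴴ)).trace.re)
      * (Real.sqrt (1 + Real.cos (θ l)) - 1) ^ 2 := by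
  classical
  obtain ⟨hR₂H, hR₂sq⟩ := hR₂refl
  obtain ⟨hR₃H, hR₃sq⟩ := hR₃refl
  set M : Matrix (Fin 2 × Fin m) (Fin 2 × Fin m) ℂ :=
    ∑ l : Fin m, Bb (θ l) ⊗ₖ Matrix.single l l (1:ℂ) with hMdef
  set N : Matrix (Fin 2 × Fin m) (Fin 2 × Fin m) ℂ :=
    PZ ⊗ₖ (1 : Matrix (Fin m) (Fin m) ℂ) with hNdef
  have hR₂' : R₂ = Vᴴ * M * V := by rw [hMdef]; simp only [Bb]; exact hR₂
  have hR₃' : R₃ = Vᴴ * N * V := hR₃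
  clear hR₂ hR₃
  have hNsum : N = ∑ l : Fin m, PZ ⊗ₖ Matrix.single l l (1:ℂ) := by
    rw [hNdef, ← sum_std_one, kron_sum_right]
  have hMH : Mᴴ = M := by
    rw [hMdef, conjTranspose_sum]
    exact Finset.sum_congr rfl fun l _ => by rw [kronCT, Bb_H, stdH]
  have hNH : Nᴴ = N := by rw [hNdef, kronCT, conjTranspose_one, PZ_H]
  have hMM : M * M = 1 := by
    rw [hMdef, K_mul]
    simp_rw [Bb_sq]
    rw [← kron_sum_right, sum_std_one, one_kronecker_one]
  have hNN : N * N = 1 := by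
    rw [hNdef, ← mul_kronecker_mul, PZ_sq, Matrix.one_mul, one_kronecker_one]
  have hU2 : (Vᴴ * M * V) * (Vᴴ * M * V) = 1 := by rw [← hR₂']; exact hR₂sq
  have hU3 : (Vᴴ * N * V) * (Vᴴ * N * V) = 1 := by rw [← hR₃']; exact hR₃sq
  have hMV : M * V = V * R₂ := by
    rw [hR₂']
    exact range_inv V hV M hMH hMM hU2
  have hNV : N * V = V * R₃ := by
    rw [hR₃']
    exact range_inv V hV N hNH hNN hU3
  have hTV : (M+N) * V = V * (R₂+R₃) := by
    rw [Matrix.add_mul, Matrix.mul_add, hMV, hNV]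
  have hT2 : (M+N)*(M+N)
      = diagonal (fun x : Fin 2 × Fin m => ((2+2*Real.cos (θ x.2) : ℝ) : ℂ)) := by
    have hMN : M + N = ∑ l : Fin m, (Bb (θ l) + PZ) ⊗ₖ Matrix.single l l (1:ℂ) := by
      rw [hMdef, hNsum, ← Finset.sum_add_distrib]
      simp_rw [add_kronecker]
    rw [hMN, K_mul]
    simp_rw [BbPZ_sq]
    rw [K_diag]
  have hcross : M*N + N*M
      = diagonal (fun x : Fin 2 × Fin m => ((2*Real.cos (θ x.2) : ℝ) : ℂ)) := by
    rw [hMdef, hNsum, K_mul, K_mul, ← Finset.sum_add_distrib]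
    simp_rw [← add_kronecker, Bb_cross]
    rw [K_diag]
  have hPT : (V*Vᴴ)*(M+N) = (M+N)*(V*Vᴴ) := by
    have hTH : (M+N)ᴴ = M+N := by rw [conjTranspose_add, hMH, hNH]
    have h1 : (M+N)*(V*Vᴴ) = V*(R₂+R₃)*Vᴴ := by rw [← Matrix.mul_assoc, hTV]
    have h2 : (V*(R₂+R₃)*Vᴴ)ᴴ = V*(R₂+R₃)*Vᴴ := by
      rw [conjTranspose_mul, conjTranspose_mul, conjTranspose_conjTranspose,
        conjTranspose_add, hR₂H, hR₃H, Matrix.mul_assoc]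
    have h3 : ((M+N)*(V*Vᴴ))ᴴ = (V*Vᴴ)*(M+N) := by
      rw [conjTranspose_mul, hTH, conjTranspose_mul, conjTranspose_conjTranspose]
    rw [← h3, h1]
    exact h2
  have ha : ∀ l, (0:ℝ) ≤ 2 + 2*Real.cos (θ l) :=
    fun l => by nlinarith [Real.neg_one_le_cos (θ l)]
  set S : Matrix (Fin 2 × Fin m) (Fin 2 × Fin m) ℂ :=
    diagonal (fun x : Fin 2 × Fin m => ((Real.sqrt (2+2*Real.cos (θ x.2)) : ℝ) : ℂ))
    with hSdef
  have hSS : S * S = (M+N)*(M+N) := by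
    rw [hSdef, hT2, diagonal_mul_diagonal]
    exact congrArg diagonal (funext fun x => by
      rw [← Complex.ofReal_mul, Real.mul_self_sqrt (ha x.2)])
  have hPT2 : (V*Vᴴ)*((M+N)*(M+N)) = ((M+N)*(M+N))*(V*Vᴴ) := by
    rw [← Matrix.mul_assoc, hPT, Matrix.mul_assoc, hPT, Matrix.mul_assoc]
  have hPS : (V*Vᴴ)*S = S*(V*Vᴴ) := by
    have hD := hPT2
    rw [hT2] at hD
    ext x y
    rw [hSdef, mul_diagonal, diagonal_mul]
    have h := congrFun (congrFun hD x) y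
    rw [mul_diagonal, diagonal_mul] at h
    by_cases hz : (V*Vᴴ) x y = 0
    · rw [hz, mul_zero, zero_mul]
    · have hxy : ((2+2*Real.cos (θ y.2) : ℝ) : ℂ) = ((2+2*Real.cos (θ x.2) : ℝ) : ℂ) := by
        rw [mul_comm ((2+2*Real.cos (θ x.2) : ℝ) : ℂ) _] at h
        exact mul_left_cancel₀ hz h
      have hreal : 2+2*Real.cos (θ y.2) = 2+2*Real.cos (θ x.2) := by exact_mod_cast hxy
      rw [hreal, mul_comm]
  have hVP : ∀ (p : ℕ) (X : Matrix (Fin k) (Fin p) ℂ), Vᴴ * (V * X) = X :=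
    fun p X => by rw [← Matrix.mul_assoc, hV, Matrix.one_mul]
  have hPS' : ∀ X : Matrix (Fin 2 × Fin m) (Fin k) ℂ,
      S*(V*(Vᴴ*X)) = V*(Vᴴ*(S*X)) := fun X => by
    calc S*(V*(Vᴴ*X)) = (S*(V*Vᴴ))*X := by simp only [Matrix.mul_assoc]
    _ = ((V*Vᴴ)*S)*X := by rw [hPS]
    _ = V*(Vᴴ*(S*X)) := by simp only [Matrix.mul_assoc]
  have hQpsd : (Vᴴ * S * V).PosSemidef := by
    refine PosSemidef.conjTranspose_mul_mul_same ?_ V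
    rw [hSdef]
    exact posSemidef_diagonal_iff.mpr fun i => Complex.zero_le_real.mpr (Real.sqrt_nonneg _)
  have hQQ : (Vᴴ*S*V)*(Vᴴ*S*V) = (R₂+R₃)*(R₂+R₃) := by
    calc (Vᴴ*S*V)*(Vᴴ*S*V) = Vᴴ*(S*(V*(Vᴴ*(S*V)))) := by simp only [Matrix.mul_assoc]
    _ = Vᴴ*(V*(Vᴴ*(S*(S*V)))) := by rw [hPS' (S*V)]
    _ = Vᴴ*(S*(S*V)) := by rw [hVP _ (Vᴴ*(S*(S*V)))]
    _ = Vᴴ*(((M+N)*(M+N))*V) := by rw [← Matrix.mul_assoc S S V, hSS]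
    _ = Vᴴ*((M+N)*(V*(R₂+R₃))) := by rw [Matrix.mul_assoc (M+N) (M+N) V, hTV]
    _ = Vᴴ*((V*(R₂+R₃))*(R₂+R₃)) := by rw [← Matrix.mul_assoc (M+N) V (R₂+R₃), hTV]
    _ = Vᴴ*(V*((R₂+R₃)*(R₂+R₃))) := by rw [Matrix.mul_assoc V (R₂+R₃) (R₂+R₃)]
    _ = (R₂+R₃)*(R₂+R₃) := hVP _ _
  have hAbS : Ab = Vᴴ * S * V := by
    open scoped MatrixOrder in
    rw [← CFC.sqrt_mul_self Ab hAb.nonneg, ← CFC.sqrt_mul_self (Vᴴ * S * V) hQpsd.nonneg, hAb2, hQQ]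
  set t : Fin m → ℂ := fun l =>
    (((1 : Matrix (Fin nA) (Fin nA) ℂ) ⊗ₖ
      (Vᴴ * ((1 : Matrix (Fin 2) (Fin 2) ℂ) ⊗ₖ Matrix.single l l (1:ℂ)) * V)) * ρ).trace
    with htdef
  have htr : ∀ f : Fin m → ℝ,
      (((1 : Matrix (Fin nA) (Fin nA) ℂ) ⊗ₖ
        (Vᴴ * diagonal (fun x : Fin 2 × Fin m => ((f x.2 : ℝ):ℂ)) * V)) * ρ).trace
      = ∑ l : Fin m, ((f l : ℝ):ℂ) * t l := by
    intro f
    rw [← K_diag (fun l => ((f l : ℝ):ℂ))]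
    simp_rw [smul_kronecker]
    rw [Matrix.mul_sum, Matrix.sum_mul]
    simp_rw [Matrix.mul_smul, Matrix.smul_mul]
    rw [kron_sum_right]
    simp_rw [kronecker_smul]
    rw [Matrix.sum_mul, trace_sum]
    simp_rw [Matrix.smul_mul, trace_smul, smul_eq_mul]
    rfl
  have hRRd : R₂ * R₃ + R₃ * R₂
      = Vᴴ * diagonal (fun x : Fin 2 × Fin m => ((2*Real.cos (θ x.2) : ℝ):ℂ)) * V := by
    have e₁ : R₂ * R₃ = Vᴴ * (M*N) * V := by
      rw [hR₂', Matrix.mul_assoc, ← hNV]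
      simp only [Matrix.mul_assoc]
    have e₂ : R₃ * R₂ = Vᴴ * (N*M) * V := by
      rw [hR₃', Matrix.mul_assoc, ← hMV]
      simp only [Matrix.mul_assoc]
    rw [e₁, e₂, ← hcross, Matrix.mul_add, Matrix.add_mul]
  have hterm1 : (((1 : Matrix (Fin nA) (Fin nA) ℂ) ⊗ₖ (R₂ * R₃ + R₃ * R₂)) * ρ).trace
      = ∑ l : Fin m, ((2*Real.cos (θ l) : ℝ):ℂ) * t l := by
    rw [hRRd]
    exact htr (fun l => 2*Real.cos (θ l))
  have hterm2 : (((1 : Matrix (Fin nA) (Fin nA) ℂ) ⊗ₖ Ab) * ρ).trace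
      = ∑ l : Fin m, ((Real.sqrt (2+2*Real.cos (θ l)) : ℝ):ℂ) * t l := by
    rw [hAbS, hSdef]
    exact htr (fun l => Real.sqrt (2+2*Real.cos (θ l)))
  have hsum1 : ∑ l : Fin m, t l = 1 := by
    have h1 := htr (fun _ => (1:ℝ))
    simp only [Complex.ofReal_one] at h1
    rw [diagonal_one, Matrix.mul_one, hV, one_kronecker_one, Matrix.one_mul, hρtr] at h1
    simpa using h1.symm
  have hp : ∀ l : Fin m,
      (((1 : Matrix (Fin nA) (Fin nA) ℂ) ⊗ₖ
          ((1 : Matrix (Fin 2) (Fin 2) ℂ) ⊗ₖ Matrix.single l l (1:ℂ)))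
        * (((1 : Matrix (Fin nA) (Fin nA) ℂ) ⊗ₖ V) * ρ
            * ((1 : Matrix (Fin nA) (Fin nA) ℂ) ⊗ₖ V)ᴴ)).trace = t l := by
    intro l
    rw [kronCT, conjTranspose_one]
    rw [show ((1 : Matrix (Fin nA) (Fin nA) ℂ) ⊗ₖ
          ((1:Matrix (Fin 2) (Fin 2) ℂ) ⊗ₖ Matrix.single l l (1:ℂ)))
        * (((1 : Matrix (Fin nA) (Fin nA) ℂ) ⊗ₖ V) * ρ
            * ((1 : Matrix (Fin nA) (Fin nA) ℂ) ⊗ₖ Vᴴ))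
      = (((1 : Matrix (Fin nA) (Fin nA) ℂ) ⊗ₖ
          ((1:Matrix (Fin 2) (Fin 2) ℂ) ⊗ₖ Matrix.single l l (1:ℂ)))
        * ((1 : Matrix (Fin nA) (Fin nA) ℂ) ⊗ₖ V) * ρ)
          * ((1 : Matrix (Fin nA) (Fin nA) ℂ) ⊗ₖ Vᴴ)
      from by simp only [Matrix.mul_assoc]]
    rw [trace_mul_comm, htdef]
    congr 1
    simp only [← Matrix.mul_assoc]
    rw [← mul_kronecker_mul, ← mul_kronecker_mul, Matrix.one_mul, Matrix.one_mul]
  simp_rw [hterm1, hterm2, hp]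
  rw [Complex.re_sum, Complex.re_sum]
  simp_rw [Complex.re_ofReal_mul]
  have hsre : ∑ l : Fin m, (t l).re = 1 := by
    rw [← Complex.re_sum, hsum1, Complex.one_re]
  have expand : (2:ℝ) + (1/2 : ℝ) * (∑ l : Fin m, 2*Real.cos (θ l) * (t l).re)
      - Real.sqrt 2 * (∑ l : Fin m, Real.sqrt (2+2*Real.cos (θ l)) * (t l).re)
      = ∑ l : Fin m, (2*(t l).re + (1/2 : ℝ)*(2*Real.cos (θ l) * (t l).re)
          - Real.sqrt 2 * (Real.sqrt (2+2*Real.cos (θ l)) * (t l).re)) := by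
    rw [Finset.sum_sub_distrib, Finset.sum_add_distrib, ← Finset.mul_sum, ← Finset.mul_sum,
      ← Finset.mul_sum, hsre]
    ring
  rw [expand]
  refine Finset.sum_congr rfl fun l _ => ?_
  have h1c : (0:ℝ) ≤ 1 + Real.cos (θ l) := by nlinarith [Real.neg_one_le_cos (θ l)]
  have hs2 : Real.sqrt (1+Real.cos (θ l))^2 = 1+Real.cos (θ l) := Real.sq_sqrt h1c
  have h24 : Real.sqrt 2 * Real.sqrt (2+2*Real.cos (θ l))
      = 2*Real.sqrt (1+Real.cos (θ l)) := by
    rw [← Real.sqrt_mul (by norm_num : (0:ℝ) ≤ 2),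
      show (2:ℝ)*(2+2*Real.cos (θ l)) = 2^2*(1+Real.cos (θ l)) by ring,
      Real.sqrt_mul (by positivity), Real.sqrt_sq (by norm_num)]
  linear_combination (-(t l).re) * hs2 + (-(t l).re) * h24
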